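/- Define L(x) = 2φ(1-x²)·log(x⁻² - 1) - 4φ - 2x²·log x + 2(x²-1)·log(1-x) + x + 2·log x + 1 with φ = (√5-1)/2. Then L restricted to [φ, 0.77] is Lipschitz with constant at most 15.5. -/

import Mathlib

open Real

set_option maxHeartbeats 1600000 in
theorem stmt19
    (φ : ℝ) (hφ : φ = (Real.sqrt 5 - 1) / 2)
    (L : ℝ → ℝ)
    (hL : ∀ x, L x = 2 * φ * (1 - x ^ 2) * Real.log (x⁻¹ ^ 2 - 1) - 4 * φ
        - 2 * x ^ 2 * Real.log x + 2 * (x ^ 2 - 1) * Real.log (1 - x) + x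
        + 2 * Real.log x + 1) :
    ∀ a ∈ Set.Icc φ (0.77 : ℝ), ∀ b ∈ Set.Icc φ (0.77 : ℝ),
      |L a - L b| ≤ 15.5 * |a - b| := by
  have h5l : (2.236 : ℝ) ≤ Real.sqrt 5 := by
    nlinarith [Real.sq_sqrt (show (0:ℝ) ≤ 5 by norm_num), Real.sqrt_nonneg 5]
  have h5u : Real.sqrt 5 ≤ 2.2361 := by
    nlinarith [Real.sq_sqrt (show (0:ℝ) ≤ 5 by norm_num), Real.sqrt_nonneg 5]
  have hφl : (0.618:ℝ) ≤ φ := by rw [hφ]; linarith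
  have hφu : φ ≤ (0.619:ℝ) := by rw [hφ]; linarith
  set D : ℝ → ℝ := fun x => -(4*φ*x) * Real.log (x⁻¹^2 - 1) - 4*x*Real.log x
      + 4*x*Real.log (1-x) + 3 + (2 - 4*φ) * x⁻¹ with hD
  have hLfun : L = fun x => 2 * φ * (1 - x ^ 2) * Real.log (x⁻¹ ^ 2 - 1) - 4 * φ
        - 2 * x ^ 2 * Real.log x + 2 * (x ^ 2 - 1) * Real.log (1 - x) + x
        + 2 * Real.log x + 1 := funext hL
  have hderiv : ∀ x ∈ Set.Icc φ (0.77:ℝ), HasDerivAt L (D x) x := by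
    intro x hx
    have hx1 : (0.618:ℝ) ≤ x := le_trans hφl hx.1
    have hx2 : x ≤ 0.77 := hx.2
    have hx0 : (0:ℝ) < x := by linarith
    have hx0' : x ≠ 0 := ne_of_gt hx0
    have h1x : (0:ℝ) < 1 - x := by linarith
    have h1x' : (1:ℝ) - x ≠ 0 := ne_of_gt h1x
    have h1x2 : (0:ℝ) < 1 - x^2 := by nlinarith
    have h1x2' : (1:ℝ) - x^2 ≠ 0 := ne_of_gt h1x2
    have hxi_ge : (0.77:ℝ)⁻¹ ≤ x⁻¹ := inv_anti₀ hx0 hx2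
    have hxi_pos : (0:ℝ) < x⁻¹ := inv_pos.mpr hx0
    have hti : (1.686:ℝ) ≤ x⁻¹^2 := by nlinarith
    have htpos : (0:ℝ) < x⁻¹^2 - 1 := by linarith
    have htne : x⁻¹^2 - 1 ≠ 0 := ne_of_gt htpos
    have hx2d : HasDerivAt (fun y : ℝ => y^2) (2*x) x := by
      simpa using hasDerivAt_pow 2 x
    have hu : HasDerivAt (fun y : ℝ => 2*φ*(1-y^2)) (2*φ*(-(2*x))) x :=
      (hx2d.const_sub 1).const_mul (2*φ)
    have hinv : HasDerivAt (fun y : ℝ => y⁻¹) (-(x^2)⁻¹) x := hasDerivAt_inv hx0'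
    have hw : HasDerivAt (fun y : ℝ => y⁻¹^2 - 1) ((2:ℕ) * x⁻¹^1 * (-(x^2)⁻¹)) x :=
      (hinv.pow 2).sub_const 1
    have hlogw : HasDerivAt (fun y : ℝ => Real.log (y⁻¹^2 - 1))
        (((2:ℕ) * x⁻¹^1 * (-(x^2)⁻¹)) / (x⁻¹^2 - 1)) x := hw.log htne
    have hT1 := hu.mul hlogw
    have hlogx : HasDerivAt Real.log x⁻¹ x := Real.hasDerivAt_log hx0'
    have hT2 := (hx2d.const_mul 2).mul hlogx
    have hlog1x : HasDerivAt (fun y : ℝ => Real.log (1-y)) (-1 / (1-x)) x := by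
      have h := ((hasDerivAt_id x).const_sub 1).log h1x'
      simpa using h
    have hT3 := ((hx2d.sub_const 1).const_mul 2).mul hlog1x
    have hT5 := hlogx.const_mul 2
    have hbig := (((((hT1.sub_const (4*φ)).sub hT2).add hT3).add (hasDerivAt_id x)).add
      hT5).add_const 1
    have hfrac : 2*φ*(1-x^2) * (((2:ℕ) * x⁻¹^1 * (-(x^2)⁻¹)) / (x⁻¹^2 - 1))
        = -(4*φ) * x⁻¹ := by
      have ht : x⁻¹ ^ 2 - 1 = (1 - x^2)/x^2 := by
        rw [inv_pow]
        field_simp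
      rw [ht]
      field_simp
      ring
    rw [hfrac] at hbig
    rw [hLfun]
    refine HasDerivAt.congr_deriv hbig ?_
    simp only [hD, id]
    field_simp
    ring
  have hbound : ∀ x ∈ Set.Icc φ (0.77:ℝ), ‖D x‖ ≤ 15.5 := by
    intro x hx
    have hx1 : (0.618:ℝ) ≤ x := le_trans hφl hx.1
    have hx2 : x ≤ 0.77 := hx.2
    have hx0 : (0:ℝ) < x := by linarith
    have hx0' : x ≠ 0 := ne_of_gt hx0
    have h1x : (0:ℝ) < 1 - x := by linarith
    have hxi_ge : (0.77:ℝ)⁻¹ ≤ x⁻¹ := inv_anti₀ hx0 hx2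
    have hxi_le : x⁻¹ ≤ (0.618:ℝ)⁻¹ := inv_anti₀ (by norm_num) hx1
    have hxi_pos : (0:ℝ) < x⁻¹ := inv_pos.mpr hx0
    have hxi_le' : x⁻¹ ≤ 1.619 := by
      apply le_trans hxi_le; norm_num
    have hti_l : (1.686:ℝ) ≤ x⁻¹^2 := by nlinarith
    have hti_u : x⁻¹^2 ≤ 2.619 := by nlinarith
    have htpos : (0:ℝ) < x⁻¹^2 - 1 := by linarith
    have hA : |Real.log (x⁻¹^2 - 1)| ≤ 0.62 := by
      rw [abs_le]
      constructor
      · have h := Real.log_le_sub_one_of_pos (inv_pos.mpr htpos)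
        rw [Real.log_inv] at h
        have hinvt : (x⁻¹^2 - 1)⁻¹ ≤ (0.686:ℝ)⁻¹ :=
          inv_anti₀ (by norm_num) (by linarith)
        have h686 : ((0.686:ℝ))⁻¹ ≤ 1.458 := by norm_num
        linarith
      · have h := Real.log_le_sub_one_of_pos htpos
        linarith
    have hB : |Real.log x| ≤ 0.62 := by
      rw [abs_le]
      constructor
      · have h := Real.log_le_sub_one_of_pos hxi_pos
        rw [Real.log_inv] at h
        linarith
      · have h : Real.log x ≤ 0 := Real.log_nonpos (by linarith) (by linarith)
        linarith
    have hC : |Real.log (1-x)| ≤ 1.474 := by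
      rw [abs_le]
      constructor
      · have hmono : Real.log (0.23:ℝ) ≤ Real.log (1-x) :=
          Real.log_le_log (by norm_num) (by linarith)
        have h023 : Real.log (0.23:ℝ) = -(2 * Real.log 2 + Real.log (25/23)) := by
          have h4 : (0.23:ℝ) = (2^2 * (25/23))⁻¹ := by norm_num
          rw [h4, Real.log_inv, Real.log_mul (by norm_num) (by norm_num),
            Real.log_pow]
          push_cast
          ring
        have hl2 : Real.log 2 < 0.6931471808 := Real.log_two_lt_d9
        have hl2523 : Real.log (25/23 : ℝ) ≤ 25/23 - 1 :=
          Real.log_le_sub_one_of_pos (by norm_num)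
        rw [h023] at hmono
        linarith
      · have h : Real.log (1-x) ≤ 0 := Real.log_nonpos (by linarith) (by linarith)
        linarith
    have hc1 : (0:ℝ) ≤ 4*φ*x := by nlinarith
    have hc2 : 4*φ*x ≤ 1.907 := by nlinarith
    have h1 : |-(4*φ*x) * Real.log (x⁻¹^2 - 1)| ≤ 1.19 := by
      rw [abs_mul, abs_neg, abs_of_nonneg hc1]
      calc 4*φ*x * |Real.log (x⁻¹^2 - 1)| ≤ 1.907 * 0.62 :=
            mul_le_mul hc2 hA (abs_nonneg _) (by norm_num)
        _ ≤ 1.19 := by norm_num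
    have h2 : |4*x*Real.log x| ≤ 1.91 := by
      rw [abs_mul, abs_of_nonneg (by linarith : (0:ℝ) ≤ 4*x)]
      calc 4*x * |Real.log x| ≤ 3.08 * 0.62 :=
            mul_le_mul (by linarith) hB (abs_nonneg _) (by norm_num)
        _ ≤ 1.91 := by norm_num
    have h3 : |4*x*Real.log (1-x)| ≤ 4.55 := by
      rw [abs_mul, abs_of_nonneg (by linarith : (0:ℝ) ≤ 4*x)]
      calc 4*x * |Real.log (1-x)| ≤ 3.08 * 1.474 :=
            mul_le_mul (by linarith) hC (abs_nonneg _) (by norm_num)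
        _ ≤ 4.55 := by norm_num
    have h4 : |(2 - 4*φ) * x⁻¹| ≤ 0.78 := by
      rw [abs_mul, abs_of_nonpos (by linarith : (2 - 4*φ:ℝ) ≤ 0),
        abs_of_nonneg hxi_pos.le]
      calc -(2-4*φ) * x⁻¹ ≤ 0.476 * 1.619 :=
            mul_le_mul (by linarith) hxi_le' hxi_pos.le (by norm_num)
        _ ≤ 0.78 := by norm_num
    rw [Real.norm_eq_abs, hD]
    have h1' := abs_le.mp h1
    have h2' := abs_le.mp h2
    have h3' := abs_le.mp h3
    have h4' := abs_le.mp h4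
    rw [abs_le]
    constructor <;> simp only [] <;> linarith
  intro a ha b hb
  have key := (convex_Icc φ (0.77:ℝ)).norm_image_sub_le_of_norm_hasDerivWithin_le
    (fun x hx => (hderiv x hx).hasDerivWithinAt) hbound hb ha
  simpa [Real.norm_eq_abs] using key
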